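/- arXiv:2509.11422 — 7 statements merged into one kernel-verified Lean document; each statement's English description precedes it below -/
import Mathlib

section
/- Let V and W be finite-dimensional real normed vector spaces and let Ā : V → W be an injective continuous linear map. Then there exist constants C > 0 and δ > 0 such that for all continuous linear maps A, B : V → W with ‖A − Ā‖ ≤ δ and ‖B − Ā‖ ≤ δ, one has d(Im A, Im B) ≤ C · ‖A − B‖. -/
/-- The distance between two linear subspaces `V` and `W` of a normed space:
`d(V, W) = sup { dist(v, W) : v ∈ V, ‖v‖ = 1 }`, with the convention that the
supremum of the empty set is `0` (so `d(V, W) = 0` when `V = {0}`). -/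
noncomputable def subspaceDist {E : Type*} [NormedAddCommGroup E] [NormedSpace ℝ E]
    (V W : Submodule ℝ E) : ℝ :=
  sSup ((fun v => Metric.infDist v (W : Set E)) '' {v : E | v ∈ V ∧ ‖v‖ = 1})

theorem stmt_0 {V W : Type*} [NormedAddCommGroup V] [NormedSpace ℝ V]
    [NormedAddCommGroup W] [NormedSpace ℝ W]
    [FiniteDimensional ℝ V] [FiniteDimensional ℝ W]
    (Abar : V →L[ℝ] W) (hinj : Function.Injective Abar) :
    ∃ C > (0 : ℝ), ∃ δ > (0 : ℝ), ∀ A B : V →L[ℝ] W,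
      ‖A - Abar‖ ≤ δ → ‖B - Abar‖ ≤ δ →
      subspaceDist (LinearMap.range (A : V →ₗ[ℝ] W)) (LinearMap.range (B : V →ₗ[ℝ] W)) ≤ C * ‖A - B‖ := by
  obtain ⟨K0, hK0, hanti⟩ := (Abar : V →ₗ[ℝ] W).exists_antilipschitzWith
    (LinearMap.ker_eq_bot.mpr hinj)
  set K : ℝ := (K0 : ℝ) with hKdef
  have hKpos : (0 : ℝ) < K := by exact_mod_cast hK0
  refine ⟨2 * K, by positivity, 1 / (2 * K), by positivity, fun A B hA hB => ?_⟩
  -- key lower bound on A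
  have key : ∀ u : V, ‖u‖ ≤ 2 * K * ‖A u‖ := by
    intro u
    have h1 : ‖u‖ ≤ K * ‖Abar u‖ := by
      have := hanti.le_mul_dist u 0
      simpa [dist_eq_norm] using this
    have h2 : ‖Abar u‖ ≤ ‖A u‖ + (1 / (2 * K)) * ‖u‖ := by
      have : ‖Abar u - A u‖ ≤ (1 / (2 * K)) * ‖u‖ := by
        have := (Abar - A).le_opNorm u
        have hn : ‖Abar - A‖ ≤ 1 / (2 * K) := by
          rw [show Abar - A = -(A - Abar) by abel, norm_neg]; exact hA
        calc ‖Abar u - A u‖ = ‖(Abar - A) u‖ := by simp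
          _ ≤ ‖Abar - A‖ * ‖u‖ := (Abar - A).le_opNorm u
          _ ≤ (1 / (2 * K)) * ‖u‖ := by
              exact mul_le_mul_of_nonneg_right hn (norm_nonneg u)
      calc ‖Abar u‖ ≤ ‖A u‖ + ‖Abar u - A u‖ := by
            have := norm_sub_norm_le (Abar u) (A u); linarith [norm_sub_norm_le (Abar u) (A u)]
        _ ≤ ‖A u‖ + (1 / (2 * K)) * ‖u‖ := by linarith
    have h3 : ‖u‖ ≤ K * ‖A u‖ + (1/2) * ‖u‖ := by
      have := mul_le_mul_of_nonneg_left h2 (le_of_lt hKpos)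
      have hKhalf : K * ((1 / (2 * K)) * ‖u‖) = (1/2) * ‖u‖ := by
        field_simp
      nlinarith
    linarith
  -- bound the sup
  have hnn : (0 : ℝ) ≤ 2 * K * ‖A - B‖ := by positivity
  apply Real.sSup_le _ hnn
  rintro x ⟨w, ⟨⟨u, rfl⟩, hw1⟩, rfl⟩
  have hu : ‖u‖ ≤ 2 * K := by simpa [show ‖A u‖ = 1 from hw1] using key u
  have hmem : B u ∈ (LinearMap.range (B : V →ₗ[ℝ] W) : Set W) := ⟨u, rfl⟩
  calc Metric.infDist (A u) (LinearMap.range (B : V →ₗ[ℝ] W) : Set W)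
      ≤ dist (A u) (B u) := Metric.infDist_le_dist_of_mem hmem
    _ = ‖(A - B) u‖ := by simp [dist_eq_norm]
    _ ≤ ‖A - B‖ * ‖u‖ := (A - B).le_opNorm u
    _ ≤ ‖A - B‖ * (2 * K) := mul_le_mul_of_nonneg_left hu (norm_nonneg _)
    _ = 2 * K * ‖A - B‖ := by ring
end

section
/- Let V and W be finite-dimensional real normed vector spaces with V ≠ {0}, let Ā : V → W be an injective continuous linear map, and set c = inf { ‖Ā x‖ : ‖x‖ = 1 }, so that c > 0. If a continuous linear map A : V → W satisfies ‖A − Ā‖ ≤ c/2, then for every continuous linear map B : V → W one has d(Im A, Im B) ≤ (2/c) · ‖A − B‖. -/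
theorem stmt_1 {V W : Type*} [NormedAddCommGroup V] [NormedSpace ℝ V]
    [NormedAddCommGroup W] [NormedSpace ℝ W]
    [FiniteDimensional ℝ V] [FiniteDimensional ℝ W] [Nontrivial V]
    (Abar : V →L[ℝ] W) (hinj : Function.Injective Abar)
    (c : ℝ) (hc : c = sInf ((fun x => ‖Abar x‖) '' {x : V | ‖x‖ = 1})) :
    0 < c ∧ ∀ A : V →L[ℝ] W, ‖A - Abar‖ ≤ c / 2 → ∀ B : V →L[ℝ] W,
      subspaceDist (LinearMap.range (A : V →ₗ[ℝ] W)) (LinearMap.range (B : V →ₗ[ℝ] W)) ≤ (2 / c) * ‖A - B‖ := by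
  -- the sphere is nonempty and compact
  obtain ⟨x0, hx0⟩ : ∃ x0 : V, ‖x0‖ = 1 := by
    obtain ⟨x, hx⟩ := exists_ne (0 : V)
    exact ⟨‖x‖⁻¹ • x, by
      rw [norm_smul, norm_inv, norm_norm]
      exact inv_mul_cancel₀ (norm_ne_zero_iff.mpr hx)⟩
  have hsphere : IsCompact {x : V | ‖x‖ = 1} := by
    have : {x : V | ‖x‖ = 1} = Metric.sphere (0 : V) 1 := by
      ext x; simp [dist_eq_norm]
    rw [this]; exact isCompact_sphere 0 1
  have hne : ({x : V | ‖x‖ = 1}).Nonempty := ⟨x0, hx0⟩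
  obtain ⟨xm, hxm, hmin'⟩ := hsphere.exists_isMinOn hne
    (Continuous.continuousOn (by continuity : Continuous fun x : V => ‖Abar x‖))
  have hmin : ∀ x ∈ {x : V | ‖x‖ = 1}, ‖Abar xm‖ ≤ ‖Abar x‖ := fun x hx => hmin' hx
  have hxm0 : xm ≠ 0 := by
    intro h; rw [h] at hxm; simp at hxm
  have hm : 0 < ‖Abar xm‖ := by
    rw [norm_pos_iff]
    intro h
    exact hxm0 (hinj (by simpa using h))
  have hSne : ((fun x => ‖Abar x‖) '' {x : V | ‖x‖ = 1}).Nonempty :=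
    ⟨‖Abar xm‖, xm, hxm, rfl⟩
  have hbdd : BddBelow ((fun x => ‖Abar x‖) '' {x : V | ‖x‖ = 1}) :=
    ⟨0, fun y ⟨x, _, hxy⟩ => hxy ▸ norm_nonneg _⟩
  have hcpos : 0 < c := by
    rw [hc]
    exact lt_of_lt_of_le hm (le_csInf hSne (fun y ⟨x, hx, hxy⟩ => hxy ▸ hmin x hx))
  refine ⟨hcpos, fun A hA B => ?_⟩
  -- lower bound for Abar on unit sphere
  have hAbar : ∀ x : V, ‖x‖ = 1 → c ≤ ‖Abar x‖ := fun x hx => by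
    rw [hc]; exact csInf_le hbdd ⟨x, hx, rfl⟩
  -- lower bound for A
  have hAlow : ∀ x : V, (c / 2) * ‖x‖ ≤ ‖A x‖ := by
    intro x
    rcases eq_or_ne x 0 with rfl | hx
    · simp
    · have hnx : (0:ℝ) < ‖x‖ := norm_pos_iff.mpr hx
      have hux : ‖(‖x‖⁻¹ • x)‖ = 1 := by
        rw [norm_smul, norm_inv, norm_norm]; exact inv_mul_cancel₀ hnx.ne'
      have h1 : c ≤ ‖Abar (‖x‖⁻¹ • x)‖ := hAbar _ hux
      have h2 : ‖Abar (‖x‖⁻¹ • x) - A (‖x‖⁻¹ • x)‖ ≤ c / 2 := by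
        calc ‖Abar (‖x‖⁻¹ • x) - A (‖x‖⁻¹ • x)‖ = ‖(A - Abar) (‖x‖⁻¹ • x)‖ := by
              rw [← norm_neg]; simp [ContinuousLinearMap.sub_apply, smul_sub]
          _ ≤ ‖A - Abar‖ * ‖(‖x‖⁻¹ • x)‖ := (A - Abar).le_opNorm _
          _ ≤ c / 2 := by rw [hux, mul_one]; exact hA
      have h3 : c / 2 ≤ ‖A (‖x‖⁻¹ • x)‖ := by
        have := norm_sub_norm_le (Abar (‖x‖⁻¹ • x)) (A (‖x‖⁻¹ • x))
        linarith
      have h4 : ‖A (‖x‖⁻¹ • x)‖ = ‖x‖⁻¹ * ‖A x‖ := by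
        rw [map_smul, norm_smul, norm_inv, norm_norm]
      rw [h4] at h3
      calc (c/2) * ‖x‖ ≤ (‖x‖⁻¹ * ‖A x‖) * ‖x‖ := by nlinarith
        _ = ‖A x‖ := by field_simp
  have hrhs : 0 ≤ (2 / c) * ‖A - B‖ :=
    mul_nonneg (div_nonneg (by norm_num) hcpos.le) (norm_nonneg _)
  apply Real.sSup_le _ hrhs
  rintro d ⟨w, ⟨⟨x, rfl⟩, hw1⟩, rfl⟩
  have hxle : ‖x‖ ≤ 2 / c := by
    have := hAlow x
    rw [show ‖A x‖ = 1 from hw1] at this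
    rw [le_div_iff₀ hcpos]
    nlinarith
  have hBx : (B x) ∈ (LinearMap.range (B : V →ₗ[ℝ] W) : Set W) := ⟨x, rfl⟩
  calc Metric.infDist (A x) (LinearMap.range (B : V →ₗ[ℝ] W) : Set W)
      ≤ dist (A x) (B x) := Metric.infDist_le_dist_of_mem hBx
    _ = ‖(A - B) x‖ := by rw [dist_eq_norm]; simp [ContinuousLinearMap.sub_apply]
    _ ≤ ‖A - B‖ * ‖x‖ := (A - B).le_opNorm x
    _ ≤ ‖A - B‖ * (2 / c) := by
        exact mul_le_mul_of_nonneg_left hxle (norm_nonneg _)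
    _ = (2 / c) * ‖A - B‖ := mul_comm _ _
end

section
/- Let E and F be finite-dimensional real inner product spaces, let U be an open neighborhood of a point x̄ in E, and let Φ : U → F be a C² map whose derivative DΦ(x̄) : E → F is surjective. Then there exist a constant C > 0 and a neighborhood U' ⊆ U of x̄ such that for all x, y ∈ U', d(ker DΦ(x), ker DΦ(y)) ≤ C · ‖x − y‖. -/
set_option maxHeartbeats 1000000 in
theorem stmt_2 {E F : Type*}
    [NormedAddCommGroup E] [InnerProductSpace ℝ E] [FiniteDimensional ℝ E]
    [NormedAddCommGroup F] [InnerProductSpace ℝ F] [FiniteDimensional ℝ F]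
    (U : Set E) (hU : IsOpen U) (xbar : E) (hxbar : xbar ∈ U)
    (Φ : E → F) (hΦ : ContDiffOn ℝ 2 Φ U)
    (hsurj : Function.Surjective (fderiv ℝ Φ xbar)) :
    ∃ C > (0 : ℝ), ∃ U' ⊆ U, IsOpen U' ∧ xbar ∈ U' ∧ ∀ x ∈ U', ∀ y ∈ U',
      subspaceDist (LinearMap.ker (fderiv ℝ Φ x : E →ₗ[ℝ] F)) (LinearMap.ker (fderiv ℝ Φ y : E →ₗ[ℝ] F))
        ≤ C * ‖x - y‖ := by
  set A : E → (E →L[ℝ] F) := fun x => fderiv ℝ Φ x with hAdef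
  have hA1 : ContDiffOn ℝ 1 A U := hΦ.fderiv_of_isOpen hU (by norm_num)
  obtain ⟨K, t, ht, hlip⟩ := (hA1.contDiffAt (hU.mem_nhds hxbar)).exists_lipschitzOnWith
  obtain ⟨B₀, hB₀⟩ := LinearMap.exists_rightInverse_of_surjective
    ((A xbar : E →L[ℝ] F) : E →ₗ[ℝ] F) (LinearMap.range_eq_top.2 hsurj)
  set B : F →L[ℝ] E := LinearMap.toContinuousLinearMap B₀ with hBdef
  have hBid : (A xbar).comp B = ContinuousLinearMap.id ℝ F := by
    ext w
    have := LinearMap.congr_fun hB₀ w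
    simpa [hBdef] using this
  obtain ⟨r₁, hr₁pos, hr₁⟩ := Metric.mem_nhds_iff.1 ht
  obtain ⟨r₂, hr₂pos, hr₂⟩ := Metric.isOpen_iff.1 hU xbar hxbar
  have hKpos : (0:ℝ) < (K:ℝ) + 1 := by positivity
  have hBpos : (0:ℝ) < ‖B‖ + 1 := by positivity
  set δ : ℝ := min (min r₁ r₂) ((2 * ((K:ℝ)+1) * (‖B‖+1))⁻¹) with hδdef
  have hδpos : 0 < δ := by
    refine lt_min (lt_min hr₁pos hr₂pos) (by positivity)
  set U' : Set E := Metric.ball xbar δ with hU'def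
  have hU't : U' ⊆ t := fun z hz => hr₁ (Metric.ball_subset_ball ((min_le_left _ _).trans (min_le_left _ _)) hz)
  have hU'U : U' ⊆ U := fun z hz => hr₂ (Metric.ball_subset_ball ((min_le_left _ _).trans (min_le_right _ _)) hz)
  set C : ℝ := 2 * ((K:ℝ)+1) * (‖B‖+1) with hCdef
  have hCpos : 0 < C := by positivity
  refine ⟨C, hCpos, U', hU'U, Metric.isOpen_ball, Metric.mem_ball_self hδpos, ?_⟩
  intro x hx y hy
  -- key smallness: T := 1 - (A y).comp B has norm ≤ 1/2
  have hsmall : ∀ z ∈ U', ‖ContinuousLinearMap.id ℝ F - (A z).comp B‖ ≤ 1/2 := by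
    intro z hz
    have h1 : ContinuousLinearMap.id ℝ F - (A z).comp B = (A xbar - A z).comp B := by
      rw [ContinuousLinearMap.sub_comp, hBid]
    rw [h1]
    calc ‖(A xbar - A z).comp B‖ ≤ ‖A xbar - A z‖ * ‖B‖ := ContinuousLinearMap.opNorm_comp_le _ _
      _ ≤ ((K:ℝ) * dist xbar z) * ‖B‖ := by
          refine mul_le_mul_of_nonneg_right ?_ (norm_nonneg _)
          have := hlip.dist_le_mul xbar (hU't (Metric.mem_ball_self hδpos)) z (hU't hz)
          simpa [dist_eq_norm] using this
      _ ≤ 1/2 := by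
          have hdz : dist xbar z ≤ δ := by
            rw [dist_comm]; exact le_of_lt (Metric.mem_ball.1 hz)
          have hδle : δ ≤ (2 * ((K:ℝ)+1) * (‖B‖+1))⁻¹ := min_le_right _ _
          have hK0 : (0:ℝ) ≤ K := K.coe_nonneg
          have hB0 : (0:ℝ) ≤ ‖B‖ := norm_nonneg _
          have hd0 : (0:ℝ) ≤ dist xbar z := dist_nonneg
          have h2 : (K:ℝ) * dist xbar z * ‖B‖ ≤ ((K:ℝ)+1) * (‖B‖+1) * δ := by
            nlinarith [hδpos.le]
          have hδle' : δ * (2 * ((K:ℝ)+1) * (‖B‖+1)) ≤ 1 := by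
            rw [inv_eq_one_div] at hδle
            rw [le_div_iff₀ (by positivity)] at hδle
            exact hδle
          nlinarith
  -- main estimate
  have hdist : ∀ v, v ∈ LinearMap.ker (A x : E →ₗ[ℝ] F) → ‖v‖ = 1 →
      Metric.infDist v ((LinearMap.ker (A y : E →ₗ[ℝ] F) : Submodule ℝ E) : Set E) ≤ C * ‖x - y‖ := by
    intro v hv hv1
    set T : F →L[ℝ] F := ContinuousLinearMap.id ℝ F - (A y).comp B with hTdef
    have hT2 : ‖T‖ ≤ 1/2 := hsmall y hy
    have hT1 : ‖T‖ < 1 := lt_of_le_of_lt hT2 (by norm_num)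
    set S : F →L[ℝ] F := ∑' n : ℕ, T ^ n with hSdef
    have hmul : (1 - T) * S = 1 := mul_neg_geom_series T hT1
    have h1T : (1 : F →L[ℝ] F) - T = (A y).comp B := by
      simp [hTdef, ContinuousLinearMap.one_def]
    have hSnorm : ‖S‖ ≤ 2 := by
      have := tsum_geometric_le_of_norm_lt_one T hT1
      have hone : ‖(1 : F →L[ℝ] F)‖ ≤ 1 := ContinuousLinearMap.norm_id_le
      have hinv : (1 - ‖T‖)⁻¹ ≤ 2 := by
        rw [inv_le_comm₀ (by linarith) (by norm_num)]
        linarith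
      calc ‖S‖ ≤ ‖(1 : F →L[ℝ] F)‖ - 1 + (1 - ‖T‖)⁻¹ := this
        _ ≤ 2 := by linarith
    set w : F := (A y) v with hwdef
    have hwnorm : ‖w‖ ≤ (K:ℝ) * ‖x - y‖ := by
      have hvx : (A x) v = 0 := hv
      have : w = ((A y) - (A x)) v := by simp [hwdef, hvx]
      rw [this]
      calc ‖((A y) - (A x)) v‖ ≤ ‖(A y) - (A x)‖ * ‖v‖ := ContinuousLinearMap.le_opNorm _ _
        _ = ‖(A y) - (A x)‖ := by rw [hv1, mul_one]
        _ ≤ (K:ℝ) * ‖x - y‖ := by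
            have := hlip.dist_le_mul y (hU't hy) x (hU't hx)
            rw [dist_eq_norm, dist_eq_norm] at this
            rw [norm_sub_rev (x) y]
            exact this
    set u : E := B (S w) with hudef
    have hmul2 : ((A y).comp B) * S = 1 := by rw [← h1T]; exact hmul
    have hAyu : (A y) u = w := by
      have h := congrArg (fun f : F →L[ℝ] F => f w) hmul2
      simp only [ContinuousLinearMap.mul_apply, ContinuousLinearMap.comp_apply,
        ContinuousLinearMap.one_apply] at h
      rw [hudef]
      exact h
    have hmem : v - u ∈ LinearMap.ker (A y : E →ₗ[ℝ] F) := by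
      rw [LinearMap.mem_ker]
      simp [map_sub, hAyu, hwdef]
    have hSw : ‖S w‖ ≤ 2 * ((K:ℝ) * ‖x - y‖) := by
      refine le_trans (S.le_opNorm w) ?_
      exact mul_le_mul hSnorm hwnorm (norm_nonneg _) (by norm_num)
    have hunorm : ‖u‖ ≤ ‖B‖ * (2 * ((K:ℝ) * ‖x - y‖)) := by
      refine le_trans (B.le_opNorm _) (mul_le_mul_of_nonneg_left hSw (norm_nonneg _))
    calc Metric.infDist v ((LinearMap.ker (A y : E →ₗ[ℝ] F) : Submodule ℝ E) : Set E)
        ≤ dist v (v - u) := Metric.infDist_le_dist_of_mem hmem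
      _ = ‖u‖ := by rw [dist_eq_norm, sub_sub_cancel]
      _ ≤ ‖B‖ * (2 * ((K:ℝ) * ‖x - y‖)) := hunorm
      _ ≤ C * ‖x - y‖ := by
          rw [hCdef]
          have hK0 : (0:ℝ) ≤ K := K.coe_nonneg
          have hB0 : (0:ℝ) ≤ ‖B‖ := norm_nonneg _
          have hxy0 : (0:ℝ) ≤ ‖x - y‖ := norm_nonneg _
          nlinarith
  apply Real.sSup_le
  · rintro d ⟨v, ⟨hv, hv1⟩, rfl⟩
    exact hdist v hv hv1
  · positivity
end

section
/- Let G be a Lie group acting smoothly on ℝⁿ, and suppose the action is free at x̄ ∈ ℝⁿ, i.e., the stabilizer G_{x̄} = { g ∈ G : g·x̄ = x̄ } equals {e}. Then there exist a constant C > 0 and a neighborhood U of x̄ in ℝⁿ such that for all x, y ∈ U, d(T_x(Gx), T_y(Gy)) ≤ C · ‖x − y‖, where T_x(Gx) = Im d(θ^(x))_e is the tangent space to the orbit of x at x. -/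
open scoped Manifold

/-- The tangent space `T_x(Gx) = Im d(θ^(x))_e` to the orbit of `x`, viewed as a linear
subspace of `ℝⁿ`, where `θ^(x) : G → ℝⁿ, g ↦ θ g x` is the orbit map. -/
noncomputable def orbitTangent
    {E : Type*} [NormedAddCommGroup E] [NormedSpace ℝ E]
    {H : Type*} [TopologicalSpace H] (I : ModelWithCorners ℝ E H)
    {G : Type*} [TopologicalSpace G] [ChartedSpace H G] [Group G]
    {n : ℕ} (θ : G → EuclideanSpace ℝ (Fin n) → EuclideanSpace ℝ (Fin n))
    (x : EuclideanSpace ℝ (Fin n)) : Submodule ℝ (EuclideanSpace ℝ (Fin n)) :=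
  LinearMap.range
    ((show E →L[ℝ] EuclideanSpace ℝ (Fin n) from
      mfderiv I 𝓘(ℝ, EuclideanSpace ℝ (Fin n)) (fun g => θ g x) (1 : G)) : E →ₗ[ℝ] EuclideanSpace ℝ (Fin n))

section AuxInterior

open Set Filter Metric
open scoped Manifold Topology

theorem aux_chart_interior {E : Type*} [NormedAddCommGroup E] [NormedSpace ℝ E]
    [FiniteDimensional ℝ E]
    {H : Type*} [TopologicalSpace H] (I : ModelWithCorners ℝ E H)
    (G : Type*) [TopologicalSpace G] [ChartedSpace H G] [Group G] [LieGroup I (⊤ : ℕ∞) G] :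
    extChartAt I (1 : G) 1 ∈ interior (range I) := by
  set χ := extChartAt I (1 : G) with hχ
  set φ := χ.symm with hφ
  set e₀ := χ 1 with he₀
  have h1src : (1 : G) ∈ χ.source := mem_extChartAt_source 1
  have he₀tgt : e₀ ∈ χ.target := χ.map_source h1src
  have he₀rng : e₀ ∈ range I := extChartAt_target_subset_range 1 he₀tgt
  have htgt : χ.target ∈ 𝓝[range I] e₀ := extChartAt_target_mem_nhdsWithin 1
  obtain ⟨V, hVopen, he₀V, hVsub⟩ := mem_nhdsWithin.1 htgt
  -- pick an interior point q of range I inside V ∩ χ.target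
  have hcl : e₀ ∈ closure (interior (range I)) := I.range_subset_closure_interior he₀rng
  obtain ⟨q, hqV, hq_int⟩ :=
    mem_closure_iff_nhds.1 hcl V (hVopen.mem_nhds he₀V)
  have hq_rng : q ∈ range I := interior_subset hq_int
  have hq_tgt : q ∈ χ.target := hVsub ⟨hqV, hq_rng⟩
  have hSq : range I ∈ 𝓝 q := mem_interior_iff_mem_nhds.1 hq_int
  have hq_src : φ q ∈ χ.source := χ.map_target hq_tgt
  have htgtq : χ.target ∈ 𝓝 q :=
    mem_of_superset (inter_mem (hVopen.mem_nhds hqV) hSq) hVsub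
  set g := (φ q)⁻¹ with hg
  set A : E → E := fun b => χ (g * φ b) with hA
  set A' : E → E := fun b => χ (φ q * φ b) with hA'
  have hφc : ContinuousAt φ q := (continuousOn_extChartAt_symm 1).continuousAt htgtq
  -- continuity of b ↦ g * φ b at q, with value 1
  have hmulc : ContinuousAt (fun b => g * φ b) q :=
    ((contMDiff_mul_left (I := I) (a := g) (n := ((⊤ : ℕ∞) : WithTop ℕ∞))).continuous.continuousAt).comp hφc
  have hval : g * φ q = 1 := inv_mul_cancel (φ q)
  set W : Set E := χ.target ∩ (fun b => g * φ b) ⁻¹' χ.source with hW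
  have hWq : W ∈ 𝓝 q := by
    refine inter_mem htgtq (hmulc.preimage_mem_nhds ?_)
    rw [hval]
    exact (isOpen_extChartAt_source 1).mem_nhds h1src
  have hq_W : q ∈ W := ⟨hq_tgt, by simp only [mem_preimage, hval]; exact h1src⟩
  -- smoothness of A at q (full neighborhood, since q is interior)
  have hsrc' : φ q ∈ (chartAt H (1 : G)).source := by
    rwa [← extChartAt_source I]
  have h1src' : (1 : G) ∈ (chartAt H (1 : G)).source := by rwa [← extChartAt_source I]
  have hAq : A q = e₀ := by
    simp only [hA]
    rw [hval]
  have hcmA : ContMDiffAt I I ((⊤ : ℕ∞) : WithTop ℕ∞) (fun h : G => g * h) (φ q) :=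
    contMDiff_mul_left.contMDiffAt
  have hcdA : ContDiffWithinAt ℝ ((⊤ : ℕ∞) : WithTop ℕ∞) A (range I) q := by
    have := ((contMDiffAt_iff_of_mem_source (x := (1:G)) (y := (1:G)) hsrc'
      (by rw [hval]; exact h1src')).1 hcmA).2
    rw [χ.right_inv hq_tgt] at this
    exact this
  have hcdA' : ContDiffAt ℝ ((⊤ : ℕ∞) : WithTop ℕ∞) A q := hcdA.contDiffAt hSq
  -- A' is differentiable within range I at e₀
  have hcmA' : ContMDiffAt I I ((⊤ : ℕ∞) : WithTop ℕ∞) (fun h : G => φ q * h) (1 : G) :=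
    contMDiff_mul_left.contMDiffAt
  have hcdA'w : ContDiffWithinAt ℝ ((⊤ : ℕ∞) : WithTop ℕ∞) A' (range I) e₀ := by
    have := ((contMDiffAt_iff_of_mem_source (x := (1:G)) (y := (1:G)) h1src'
      (by rw [mul_one]; exact hsrc')).1 hcmA').2
    exact this
  have hD' : HasFDerivWithinAt A' (fderivWithin ℝ A' (range I) e₀) (range I) e₀ :=
    (hcdA'w.differentiableWithinAt (by simp)).hasFDerivWithinAt
  -- derivative of A at q
  have hstrict : HasStrictFDerivAt A (fderiv ℝ A q) q :=
    hcdA'.hasStrictFDerivAt (by simp)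
  have hDA : HasFDerivWithinAt A (fderiv ℝ A q) (range I ∩ W) q :=
    hstrict.hasFDerivAt.hasFDerivWithinAt
  have hmapsTo : MapsTo A (range I ∩ W) (range I) := by
    intro b hb
    exact extChartAt_target_subset_range 1 (χ.map_source hb.2.2)
  have hD'q : HasFDerivWithinAt A' (fderivWithin ℝ A' (range I) e₀) (range I) (A q) := by
    rw [hAq]; exact hD'
  have hcomp : HasFDerivWithinAt (A' ∘ A)
      ((fderivWithin ℝ A' (range I) e₀).comp (fderiv ℝ A q)) (range I ∩ W) q :=
    hD'q.comp q hDA hmapsTo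
  have hid : ∀ b ∈ range I ∩ W, (A' ∘ A) b = b := by
    intro b hb
    have hbtgt : b ∈ χ.target := hb.2.1
    have hbsrc : g * φ b ∈ χ.source := hb.2.2
    simp only [Function.comp, hA, hA']
    rw [χ.left_inv hbsrc, mul_inv_cancel_left, χ.right_inv hbtgt]
  have hq_s : q ∈ range I ∩ W := ⟨hq_rng, hq_W⟩
  have hidDeriv : HasFDerivWithinAt (A' ∘ A) (ContinuousLinearMap.id ℝ E)
      (range I ∩ W) q :=
    (hasFDerivWithinAt_id q _).congr hid (hid q hq_s)
  have hUD : UniqueDiffWithinAt ℝ (range I ∩ W) q :=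
    uniqueDiffWithinAt_of_mem_nhds (inter_mem hSq hWq)
  have heq : (fderivWithin ℝ A' (range I) e₀).comp (fderiv ℝ A q)
      = ContinuousLinearMap.id ℝ E := hUD.eq hcomp hidDeriv
  have hleft : ∀ u, fderivWithin ℝ A' (range I) e₀ (fderiv ℝ A q u) = u := by
    intro u
    rw [← ContinuousLinearMap.comp_apply, heq, ContinuousLinearMap.id_apply]
  have hinj : Function.Injective (fderiv ℝ A q) := by
    intro u v huv
    have := congrArg (fderivWithin ℝ A' (range I) e₀) huv
    rwa [hleft, hleft] at this
  have hsurj : Function.Surjective (fderiv ℝ A q) :=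
    LinearMap.injective_iff_surjective.1 hinj
  set eqv : E ≃L[ℝ] E :=
    (LinearEquiv.ofBijective ((fderiv ℝ A q) : E →ₗ[ℝ] E)
      ⟨hinj, hsurj⟩).toContinuousLinearEquiv with heqv
  have hcoe : (eqv : E →L[ℝ] E) = fderiv ℝ A q := by
    ext u; rfl
  have hmap : map A (𝓝 q) = 𝓝 e₀ := by
    have := (show HasStrictFDerivAt A ((eqv : E →L[ℝ] E)) q by rw [hcoe]; exact hstrict)
    have h2 := this.map_nhds_eq_of_equiv
    rwa [hAq] at h2
  rw [mem_interior_iff_mem_nhds, ← hmap, mem_map]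
  exact mem_of_superset (inter_mem hSq hWq) fun b hb => hmapsTo hb

end AuxInterior

section MainProof

open Set Filter Metric
open scoped Manifold Topology

set_option maxHeartbeats 2000000 in
theorem stmt_4 {n : ℕ}
    {E : Type*} [NormedAddCommGroup E] [NormedSpace ℝ E] [FiniteDimensional ℝ E]
    {H : Type*} [TopologicalSpace H] {I : ModelWithCorners ℝ E H}
    {G : Type*} [TopologicalSpace G] [ChartedSpace H G] [Group G] [LieGroup I (⊤ : ℕ∞) G]
    (θ : G → EuclideanSpace ℝ (Fin n) → EuclideanSpace ℝ (Fin n))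
    (hsmooth : ContMDiff (I.prod 𝓘(ℝ, EuclideanSpace ℝ (Fin n)))
      𝓘(ℝ, EuclideanSpace ℝ (Fin n)) (⊤ : ℕ∞) (fun p : G × EuclideanSpace ℝ (Fin n) => θ p.1 p.2))
    (hmul : ∀ g h x, θ (g * h) x = θ g (θ h x))
    (hone : ∀ x, θ 1 x = x)
    (xbar : EuclideanSpace ℝ (Fin n))
    (hfree : ∀ g : G, θ g xbar = xbar → g = 1) :
    ∃ C > (0 : ℝ), ∃ U ∈ nhds xbar, ∀ x ∈ U, ∀ y ∈ U,
      subspaceDist (orbitTangent I θ x) (orbitTangent I θ y) ≤ C * ‖x - y‖ := by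
  classical
  set χ := extChartAt I (1 : G) with hχ
  set φ := χ.symm with hφdef
  set e₀ := χ 1 with he₀def
  have h1src : (1 : G) ∈ χ.source := mem_extChartAt_source 1
  have hφe₀ : φ e₀ = 1 := χ.left_inv h1src
  have hint : e₀ ∈ interior (range I) := aux_chart_interior I G
  have hSnhds : range I ∈ 𝓝 e₀ := mem_interior_iff_mem_nhds.1 hint
  have htgtnhds : χ.target ∈ 𝓝 e₀ := by
    have h := extChartAt_target_mem_nhdsWithin (I := I) (1 : G)
    rwa [nhdsWithin_eq_nhds.2 hSnhds] at h
  obtain ⟨r, hr, hball⟩ := Metric.mem_nhds_iff.1 (inter_mem htgtnhds hSnhds)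
  set B := Metric.ball e₀ r with hBdef
  have hBtgt : B ⊆ χ.target := fun b hb => (hball hb).1
  have he₀B : e₀ ∈ B := Metric.mem_ball_self hr
  -- neighborhood where products of chart points are in the chart source
  have hφce₀ : ContinuousAt φ e₀ := (continuousOn_extChartAt_symm 1).continuousAt htgtnhds
  have hQ : {p : E × E | φ p.1 * φ p.2 ∈ χ.source} ∈ 𝓝 (e₀, e₀) := by
    have hc1 : ContinuousAt (fun p : E × E => φ p.1) (e₀, e₀) :=
      ContinuousAt.comp (g := φ) (f := Prod.fst) hφce₀ continuousAt_fst
    have hc2 : ContinuousAt (fun p : E × E => φ p.2) (e₀, e₀) :=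
      ContinuousAt.comp (g := φ) (f := Prod.snd) hφce₀ continuousAt_snd
    have hcont : ContinuousAt (fun p : E × E => φ p.1 * φ p.2) (e₀, e₀) :=
      ContinuousAt.comp (x := (e₀, e₀)) (f := fun p : E × E => (φ p.1, φ p.2))
        ((contMDiff_mul I ((⊤ : ℕ∞) : WithTop ℕ∞) (G := G)).continuous.continuousAt)
        (hc1.prodMk hc2)
    refine hcont.preimage_mem_nhds ((isOpen_extChartAt_source 1).mem_nhds ?_)
    rw [hφe₀, one_mul]
    exact h1src
  obtain ⟨r₁, hr₁, hr₁sub⟩ := Metric.mem_nhds_iff.1 hQ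
  set r₂ := min r r₁ with hr₂def
  have hr₂ : 0 < r₂ := lt_min hr hr₁
  set B' := Metric.ball e₀ r₂ with hB'def
  have hB'B : B' ⊆ B := Metric.ball_subset_ball (min_le_left _ _)
  have he₀B' : e₀ ∈ B' := Metric.mem_ball_self hr₂
  have hmulcond : ∀ a ∈ B', ∀ b ∈ B', φ a * φ b ∈ χ.source := by
    intro a ha b hb
    have : (a, b) ∈ Metric.ball (e₀, e₀) r₁ := by
      rw [← ball_prod_same]
      exact ⟨Metric.ball_subset_ball (min_le_right _ _) ha,
        Metric.ball_subset_ball (min_le_right _ _) hb⟩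
    exact hr₁sub this
  -- the action and multiplication in charts
  set Ψ : E × EuclideanSpace ℝ (Fin n) → EuclideanSpace ℝ (Fin n) := fun p => θ (φ p.1) p.2 with hΨdef
  set μ : E × E → E := fun p => χ (φ p.1 * φ p.2) with hμdef
  have hφsm : ContMDiffOn 𝓘(ℝ, E) I ((⊤ : ℕ∞) : WithTop ℕ∞) φ χ.target := contMDiffOn_extChartAt_symm 1
  have hΨ : ContDiffOn ℝ ((⊤ : ℕ∞) : WithTop ℕ∞) Ψ (B ×ˢ univ) := by
    have h1 : ContMDiffOn 𝓘(ℝ, E × (EuclideanSpace ℝ (Fin n))) (I.prod 𝓘(ℝ, (EuclideanSpace ℝ (Fin n)))) ((⊤ : ℕ∞) : WithTop ℕ∞)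
        (fun p : E × EuclideanSpace ℝ (Fin n) => (φ p.1, p.2)) (B ×ˢ univ) := by
      apply ContMDiffOn.prodMk
      · exact hφsm.comp (contDiff_fst.contMDiff).contMDiffOn (fun p hp => hBtgt hp.1)
      · exact (contDiff_snd.contMDiff).contMDiffOn
    have h2 : ContMDiffOn 𝓘(ℝ, E × (EuclideanSpace ℝ (Fin n))) 𝓘(ℝ, (EuclideanSpace ℝ (Fin n))) ((⊤ : ℕ∞) : WithTop ℕ∞) Ψ (B ×ˢ univ) :=
      hsmooth.comp_contMDiffOn h1
    exact contMDiffOn_iff_contDiffOn.1 h2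
  have hμ : ContDiffOn ℝ ((⊤ : ℕ∞) : WithTop ℕ∞) μ (B' ×ˢ B') := by
    have h1 : ContMDiffOn 𝓘(ℝ, E × E) (I.prod I) ((⊤ : ℕ∞) : WithTop ℕ∞)
        (fun p : E × E => (φ p.1, φ p.2)) (B' ×ˢ B') := by
      apply ContMDiffOn.prodMk
      · exact hφsm.comp (contDiff_fst.contMDiff).contMDiffOn (fun p hp => hBtgt (hB'B hp.1))
      · exact hφsm.comp (contDiff_snd.contMDiff).contMDiffOn (fun p hp => hBtgt (hB'B hp.2))
    have hk : ContMDiffOn 𝓘(ℝ, E × E) I ((⊤ : ℕ∞) : WithTop ℕ∞)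
        (fun p : E × E => φ p.1 * φ p.2) (B' ×ˢ B') :=
      (contMDiff_mul I ((⊤ : ℕ∞) : WithTop ℕ∞)).comp_contMDiffOn h1
    have hχsm : ContMDiffOn I 𝓘(ℝ, E) ((⊤ : ℕ∞) : WithTop ℕ∞) χ (chartAt H (1 : G)).source :=
      contMDiffOn_extChartAt
    have h2 : ContMDiffOn 𝓘(ℝ, E × E) 𝓘(ℝ, E) ((⊤ : ℕ∞) : WithTop ℕ∞) μ (B' ×ˢ B') := by
      refine hχsm.comp hk ?_
      intro p hp
      have := hmulcond _ hp.1 _ hp.2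
      rwa [hχ, extChartAt_source] at this
    exact contMDiffOn_iff_contDiffOn.1 h2
  have hBopen : IsOpen (B ×ˢ (univ : Set (EuclideanSpace ℝ (Fin n)))) := Metric.isOpen_ball.prod isOpen_univ
  have hB'open : IsOpen (B' ×ˢ B') := Metric.isOpen_ball.prod Metric.isOpen_ball
  set 𝒜 : (EuclideanSpace ℝ (Fin n)) → (E →L[ℝ] (EuclideanSpace ℝ (Fin n))) :=
    fun x => (fderiv ℝ Ψ (e₀, x)).comp (ContinuousLinearMap.inl ℝ E (EuclideanSpace ℝ (Fin n))) with h𝒜def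
  have hmemB : ∀ x : EuclideanSpace ℝ (Fin n), (e₀, x) ∈ B ×ˢ (univ : Set (EuclideanSpace ℝ (Fin n))) := fun x => ⟨he₀B, trivial⟩
  have hΨdiff : ∀ p ∈ B ×ˢ (univ : Set (EuclideanSpace ℝ (Fin n))), DifferentiableAt ℝ Ψ p := fun p hp =>
    (hΨ.contDiffAt (hBopen.mem_nhds hp)).differentiableAt (by simp)
  have hpart : ∀ x : EuclideanSpace ℝ (Fin n), HasFDerivAt (fun e => Ψ (e, x)) (𝒜 x) e₀ := fun x =>
    ((hΨdiff (e₀, x) (hmemB x)).hasFDerivAt).comp (g := Ψ) e₀ (hasFDerivAt_prodMk_left (𝕜 := ℝ) e₀ x)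
  -- identification with the manifold derivative of the orbit map
  have horb : ∀ x : EuclideanSpace ℝ (Fin n),
      orbitTangent I θ x = LinearMap.range (𝒜 x : E →ₗ[ℝ] EuclideanSpace ℝ (Fin n)) := by
    intro x
    have hcm : ContMDiff I 𝓘(ℝ, (EuclideanSpace ℝ (Fin n))) ((⊤ : ℕ∞) : WithTop ℕ∞) (fun g : G => θ g x) :=
      hsmooth.comp ((contMDiff_id).prodMk (contMDiff_const (c := x)))
    have hmd : MDifferentiableAt I 𝓘(ℝ, (EuclideanSpace ℝ (Fin n))) (fun g : G => θ g x) 1 :=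
      hcm.mdifferentiableAt (by simp)
    have hwr : writtenInExtChartAt I 𝓘(ℝ, (EuclideanSpace ℝ (Fin n))) (1 : G) (fun g : G => θ g x)
        = fun e => Ψ (e, x) := by
      funext e
      simp only [writtenInExtChartAt, Function.comp, extChartAt_model_space_eq_id,
        PartialEquiv.refl_coe, id]
      rfl
    have hmf : mfderiv I 𝓘(ℝ, (EuclideanSpace ℝ (Fin n))) (fun g : G => θ g x) 1 = 𝒜 x := by
      rw [hmd.mfderiv, hwr, ← hχ, ← he₀def, fderivWithin_of_mem_nhds hSnhds]
      exact (hpart x).fderiv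
    simp only [orbitTangent]
    rw [hmf]
  -- Lipschitz continuity of 𝒜
  obtain ⟨K, t, ht, hlip⟩ : ∃ K, ∃ t ∈ 𝓝 xbar, LipschitzOnWith K 𝒜 t := by
    have hfd : ContDiffOn ℝ 1 (fderiv ℝ Ψ) (B ×ˢ univ) :=
      hΨ.fderiv_of_isOpen hBopen (by
      rw [show ((1 : WithTop ℕ∞) + 1) = ((2 : ℕ∞) : WithTop ℕ∞) from rfl]
      exact WithTop.coe_le_coe.2 le_top)
    have hin : ContDiffAt ℝ 1 (fun x : EuclideanSpace ℝ (Fin n) => ((e₀, x) : E × (EuclideanSpace ℝ (Fin n)))) xbar :=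
      (contDiff_const.prodMk contDiff_id).contDiffAt
    have h1 : ContDiffAt ℝ 1 (fun x : EuclideanSpace ℝ (Fin n) => fderiv ℝ Ψ (e₀, x)) xbar :=
      (hfd.contDiffAt (hBopen.mem_nhds (hmemB xbar))).comp xbar hin
    have h2 : ContDiffAt ℝ 1 𝒜 xbar :=
      (((ContinuousLinearMap.compL ℝ E (E × (EuclideanSpace ℝ (Fin n))) (EuclideanSpace ℝ (Fin n))).flip
        (ContinuousLinearMap.inl ℝ E (EuclideanSpace ℝ (Fin n)))).contDiff.contDiffAt).comp xbar h1
    exact h2.exists_lipschitzOnWith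
  -- injectivity of 𝒜 xbar
  have hinj : ∀ X : E, 𝒜 xbar X = 0 → X = 0 := by
    intro X hX0
    have hμdiff : ∀ a ∈ B', HasFDerivAt (fun b => μ (a, b))
        ((fderiv ℝ μ (a, e₀)).comp (ContinuousLinearMap.inr ℝ E E)) e₀ := by
      intro a ha
      have hd : DifferentiableAt ℝ μ (a, e₀) :=
        (hμ.contDiffAt (hB'open.mem_nhds ⟨ha, he₀B'⟩)).differentiableAt
          (by simp)
      exact hd.hasFDerivAt.comp e₀ (hasFDerivAt_prodMk_right a e₀)
    set w : E → E := fun a =>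
      ((fderiv ℝ μ (a, e₀)).comp (ContinuousLinearMap.inr ℝ E E)) X with hwdef
    have hwcd : ContDiffAt ℝ 1 w e₀ := by
      have hfdμ : ContDiffOn ℝ 1 (fderiv ℝ μ) (B' ×ˢ B') :=
        hμ.fderiv_of_isOpen hB'open (by
          rw [show ((1 : WithTop ℕ∞) + 1) = ((2 : ℕ∞) : WithTop ℕ∞) from rfl]
          exact WithTop.coe_le_coe.2 le_top)
      have hin : ContDiffAt ℝ 1 (fun a : E => ((a, e₀) : E × E)) e₀ :=
        (contDiff_id.prodMk contDiff_const).contDiffAt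
      have h1 : ContDiffAt ℝ 1 (fun a : E => fderiv ℝ μ (a, e₀)) e₀ :=
        (hfdμ.contDiffAt (hB'open.mem_nhds ⟨he₀B', he₀B'⟩)).comp e₀ hin
      exact (((ContinuousLinearMap.apply ℝ E X).comp
        ((ContinuousLinearMap.compL ℝ E (E × E) E).flip
          (ContinuousLinearMap.inr ℝ E E))).contDiff.contDiffAt).comp e₀ h1
    have hμid : (fun b => μ (e₀, b)) =ᶠ[𝓝 e₀] id := by
      filter_upwards [Metric.isOpen_ball.mem_nhds he₀B'] with b hb
      show χ (φ e₀ * φ b) = b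
      rw [hφe₀, one_mul]
      exact χ.right_inv (hBtgt (hB'B hb))
    have hid : HasFDerivAt (fun b => μ (e₀, b)) (ContinuousLinearMap.id ℝ E) e₀ :=
      (hasFDerivAt_id e₀).congr_of_eventuallyEq hμid
    have hwe₀ : w e₀ = X := by
      have huni := (hμdiff e₀ he₀B').unique hid
      show ((fderiv ℝ μ (e₀, e₀)).comp (ContinuousLinearMap.inr ℝ E E)) X = X
      rw [huni]
      rfl
    set fh : E → EuclideanSpace ℝ (Fin n) := fun b => Ψ (b, xbar) with hfhdef
    have hfhd : ∀ a ∈ B, DifferentiableAt ℝ fh a := by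
      intro a ha
      exact (hΨdiff _ ⟨ha, trivial⟩).comp a
        (differentiableAt_id.prodMk (differentiableAt_const xbar))
    have hfde₀ : fderiv ℝ fh e₀ = 𝒜 xbar := (hpart xbar).fderiv
    have hfhX : fderiv ℝ fh e₀ X = 0 := by rw [hfde₀]; exact hX0
    have hμa : ∀ a ∈ B', μ (a, e₀) = a := by
      intro a ha
      show χ (φ a * φ e₀) = a
      rw [hφe₀, mul_one]
      exact χ.right_inv (hBtgt (hB'B ha))
    have hfhe₀ : fh e₀ = xbar := by
      show θ (φ e₀) xbar = xbar
      rw [hφe₀, hone]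
    have hann : ∀ a ∈ B', fderiv ℝ fh a (w a) = 0 := by
      intro a ha
      have haB : a ∈ B := hB'B ha
      have hev : (fun b => fh (μ (a, b))) =ᶠ[𝓝 e₀] fun b => θ (φ a) (fh b) := by
        filter_upwards [Metric.isOpen_ball.mem_nhds he₀B'] with b hb
        have hs : φ a * φ b ∈ χ.source := hmulcond a ha b hb
        show θ (φ (χ (φ a * φ b))) xbar = θ (φ a) (θ (φ b) xbar)
        rw [χ.left_inv hs, hmul]
      have hL : HasFDerivAt (fun b => fh (μ (a, b)))
          ((fderiv ℝ fh a).comp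
            ((fderiv ℝ μ (a, e₀)).comp (ContinuousLinearMap.inr ℝ E E))) e₀ := by
        have h1 : HasFDerivAt fh (fderiv ℝ fh a) (μ (a, e₀)) := by
          rw [hμa a ha]; exact (hfhd a haB).hasFDerivAt
        exact h1.comp e₀ (hμdiff a ha)
      have hg : DifferentiableAt ℝ (fun y => Ψ (a, y)) xbar :=
        (hΨdiff _ ⟨haB, trivial⟩).comp xbar
          ((differentiableAt_const a).prodMk differentiableAt_id)
      have hR : HasFDerivAt (fun b => θ (φ a) (fh b))
          ((fderiv ℝ (fun y => Ψ (a, y)) xbar).comp (fderiv ℝ fh e₀)) e₀ := by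
        have h2 : HasFDerivAt (fun y => Ψ (a, y))
            (fderiv ℝ (fun y => Ψ (a, y)) xbar) (fh e₀) := by
          rw [hfhe₀]; exact hg.hasFDerivAt
        exact h2.comp e₀ (hfhd e₀ he₀B).hasFDerivAt
      have huniq := hL.unique (hR.congr_of_eventuallyEq hev)
      have happ := congrArg (fun L : E →L[ℝ] EuclideanSpace ℝ (Fin n) => L X) huniq
      simp only [ContinuousLinearMap.comp_apply] at happ
      rw [hfhX, map_zero] at happ
      exact happ
    obtain ⟨α, hα0, ε, hε, hαd⟩ := hwcd.exists_forall_mem_closedBall_exists_eq_forall_mem_Ioo_hasDerivAt₀ 0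
    have h0mem : (0 : ℝ) ∈ Ioo (0 - ε) (0 + ε) := by constructor <;> simp [hε]
    have hαc : ContinuousAt α 0 := (hαd 0 h0mem).continuousAt
    have hpre : α ⁻¹' B' ∈ 𝓝 0 :=
      hαc.preimage_mem_nhds (Metric.isOpen_ball.mem_nhds (by rw [hα0]; exact he₀B'))
    obtain ⟨δ₀, hδ₀, hδ₀sub⟩ := Metric.mem_nhds_iff.1 hpre
    set δ := min (δ₀ / 2) (ε / 2) with hδdef
    have hδpos : 0 < δ := lt_min (by linarith) (by linarith)
    have hIcc : ∀ t ∈ Icc (-δ) δ, α t ∈ B' ∧ t ∈ Ioo (0 - ε) (0 + ε) := by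
      intro t ht
      have h1 : |t| ≤ δ := abs_le.2 ht
      have h2 : δ ≤ δ₀ / 2 := min_le_left _ _
      have h3 : δ ≤ ε / 2 := min_le_right _ _
      constructor
      · apply hδ₀sub
        rw [Metric.mem_ball, Real.dist_eq, sub_zero]
        linarith
      · rw [abs_le] at h1
        constructor <;> [linarith; linarith]
    have hder : ∀ t ∈ Icc (-δ) δ, HasDerivAt (fun s => fh (α s)) 0 t := by
      intro t ht
      obtain ⟨hαB', htI⟩ := hIcc t ht
      have h1 : HasDerivAt α (w (α t)) t := hαd t htI
      have h2 : HasFDerivAt fh (fderiv ℝ fh (α t)) (α t) :=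
        (hfhd _ (hB'B hαB')).hasFDerivAt
      have h3 := h2.comp_hasDerivAt t h1
      rwa [hann _ hαB'] at h3
    have hcont : ContinuousOn (fun s => fh (α s)) (Icc (-δ) δ) :=
      fun t ht => ((hder t ht).continuousAt).continuousWithinAt
    have hconst := constant_of_has_deriv_right_zero hcont
      (fun t ht => ((hder t (Ico_subset_Icc_self ht)).hasDerivWithinAt))
    have h0I : (0 : ℝ) ∈ Icc (-δ) δ := by constructor <;> linarith
    have hval : ∀ t ∈ Icc (-δ) δ, θ (φ (α t)) xbar = xbar := by
      intro t ht
      have heq2 := (hconst t ht).trans (hconst 0 h0I).symm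
      show fh (α t) = xbar
      rw [heq2, hα0, hfhe₀]
    have hαe₀ : ∀ t ∈ Icc (-δ) δ, α t = e₀ := by
      intro t ht
      have h2 : φ (α t) = 1 := hfree _ (hval t ht)
      have h3 : α t ∈ χ.target := hBtgt (hB'B (hIcc t ht).1)
      have h4 := χ.right_inv h3
      rw [h2] at h4
      rw [← h4, he₀def]
    have heqa : α =ᶠ[𝓝 0] fun _ => e₀ := by
      filter_upwards [Icc_mem_nhds (by linarith : -δ < 0) hδpos] with t ht
      exact hαe₀ t ht
    have h1 : HasDerivAt α (w e₀) 0 := by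
      have := hαd 0 h0mem
      rwa [hα0] at this
    have h2 : HasDerivAt α 0 0 :=
      (hasDerivAt_const 0 e₀).congr_of_eventuallyEq heqa
    have h3 := h1.unique h2
    rw [hwe₀] at h3
    exact h3
  -- conclusion
  clear_value 𝒜
  have hinj' : Function.Injective (𝒜 xbar) := by
    intro u v huv
    have h := hinj (u - v) (by rw [map_sub, huv, sub_self])
    exact sub_eq_zero.1 h
  obtain ⟨c, hcpos, hantil⟩ := LinearMap.exists_antilipschitzWith
      ((𝒜 xbar) : E →ₗ[ℝ] (EuclideanSpace ℝ (Fin n)))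
      (LinearMap.ker_eq_bot.2 hinj')
  have hbound : ∀ u : E, ‖u‖ ≤ (c : ℝ) * ‖𝒜 xbar u‖ := fun u =>
    (𝒜 xbar).bound_of_antilipschitz hantil u
  have hxbar_t : xbar ∈ t := mem_of_mem_nhds ht
  set c' : ℝ := (c : ℝ) + 1 with hc'def
  have hc'pos : 0 < c' := by positivity
  set ρ : ℝ := (1 : ℝ) / (2 * c' * ((K : ℝ) + 1)) with hρdef
  have hρpos : 0 < ρ := by positivity
  set U := t ∩ Metric.ball xbar ρ with hUdef
  have hU : U ∈ 𝓝 xbar := inter_mem ht (Metric.ball_mem_nhds xbar hρpos)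
  have hdistA : ∀ p ∈ U, ∀ q ∈ U, ‖𝒜 p - 𝒜 q‖ ≤ (K : ℝ) * ‖p - q‖ := by
    intro p hp q hq
    have h := hlip.dist_le_mul p hp.1 q hq.1
    rwa [dist_eq_norm, dist_eq_norm] at h
  have hxbarU : xbar ∈ U := ⟨hxbar_t, Metric.mem_ball_self hρpos⟩
  have hlow : ∀ p ∈ U, ∀ u : E, ‖u‖ ≤ 2 * c' * ‖𝒜 p u‖ := by
    intro p hp u
    have h1 : ‖u‖ ≤ c' * ‖𝒜 xbar u‖ := by
      have hcc : (c : ℝ) ≤ c' := by rw [hc'def]; linarith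
      have := hbound u
      nlinarith [norm_nonneg (𝒜 xbar u)]
    have h2 : ‖𝒜 xbar u - 𝒜 p u‖ ≤ ‖𝒜 xbar - 𝒜 p‖ * ‖u‖ := by
      have h2' := (𝒜 xbar - 𝒜 p).le_opNorm u
      rwa [ContinuousLinearMap.sub_apply] at h2'
    have h5 : ‖xbar - p‖ ≤ ρ := by
      have hb := hp.2
      rw [Metric.mem_ball, dist_eq_norm] at hb
      rw [norm_sub_rev]
      linarith
    have h3 : ‖𝒜 xbar - 𝒜 p‖ ≤ (K : ℝ) * ρ := by
      have h4 := hdistA xbar hxbarU p hp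
      nlinarith [K.coe_nonneg]
    have h6 : (K : ℝ) * ρ ≤ 1 / (2 * c') := by
      rw [hρdef, mul_one_div, div_le_div_iff₀ (by positivity) (by positivity)]
      nlinarith [K.coe_nonneg]
    have h7 : ‖𝒜 xbar u‖ ≤ ‖𝒜 p u‖ + (1 / (2 * c')) * ‖u‖ := by
      have h8 : ‖𝒜 xbar u‖ ≤ ‖𝒜 p u‖ + ‖𝒜 xbar u - 𝒜 p u‖ := by
        have htriv : ‖𝒜 xbar u‖ = ‖(𝒜 xbar u - 𝒜 p u) + 𝒜 p u‖ := by
          rw [sub_add_cancel]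
        rw [htriv]
        exact le_trans (norm_add_le _ _) (by linarith)
      have h9 : ‖𝒜 xbar u - 𝒜 p u‖ ≤ (1 / (2 * c')) * ‖u‖ := by
        calc ‖𝒜 xbar u - 𝒜 p u‖ ≤ ‖𝒜 xbar - 𝒜 p‖ * ‖u‖ := h2
          _ ≤ ((K : ℝ) * ρ) * ‖u‖ := by nlinarith [norm_nonneg u]
          _ ≤ (1 / (2 * c')) * ‖u‖ := by nlinarith [norm_nonneg u]
      linarith
    have h14 := mul_le_mul_of_nonneg_left h7 hc'pos.le
    have h15 : c' * ((1 / (2 * c')) * ‖u‖) = ‖u‖ / 2 := by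
      field_simp
    nlinarith [h1, h14, h15, norm_nonneg (𝒜 p u), norm_nonneg u]
  refine ⟨2 * c' * (K : ℝ) + 1, by positivity, U, hU, ?_⟩
  intro x hx y hy
  rw [horb x, horb y]
  unfold subspaceDist
  apply Real.sSup_le
  · rintro z ⟨v, ⟨hvmem, hv1⟩, rfl⟩
    obtain ⟨u, hu⟩ := hvmem
    replace hu : 𝒜 x u = v := hu
    have hu1 : ‖u‖ ≤ 2 * c' := by
      have h := hlow x hx u
      rw [hu, hv1] at h
      linarith
    have hle := Metric.infDist_le_dist_of_mem
      (s := ((LinearMap.range (𝒜 y : E →ₗ[ℝ] EuclideanSpace ℝ (Fin n)) : Submodule ℝ (EuclideanSpace ℝ (Fin n))) :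
        Set (EuclideanSpace ℝ (Fin n)))) (x := v) (y := 𝒜 y u) ⟨u, rfl⟩
    refine le_trans hle ?_
    rw [dist_eq_norm, ← hu]
    have h11 : ‖𝒜 x u - 𝒜 y u‖ ≤ ‖𝒜 x - 𝒜 y‖ * ‖u‖ := by
      have h11' := (𝒜 x - 𝒜 y).le_opNorm u
      rwa [ContinuousLinearMap.sub_apply] at h11'
    have h12 : ‖𝒜 x - 𝒜 y‖ ≤ (K : ℝ) * ‖x - y‖ := hdistA x hx y hy
    have h13 : (0 : ℝ) ≤ ‖x - y‖ := norm_nonneg _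
    nlinarith [norm_nonneg (𝒜 x - 𝒜 y), K.coe_nonneg]
  · positivity

end MainProof
end

section
/- Let f : ℝⁿ → ℝ be differentiable, let B be a symmetric n×n real matrix, and let γ : ℝ → ℝ^{n×n} be a matrix-valued curve differentiable at 0 with γ(0) = I (the identity matrix), γ'(0) = B, and f(γ(t)·x) = f(x) for all x ∈ ℝⁿ and all t in a neighborhood of 0 (where γ(t)·x denotes matrix–vector multiplication). If x : ℝ → ℝⁿ is differentiable and satisfies the gradient flow equation x'(t) = −∇f(x(t)) for all t ∈ ℝ, then the function t ↦ ⟨x(t), B·x(t)⟩ is constant. -/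
open scoped RealInnerProductSpace Matrix

attribute [local instance] Matrix.frobeniusNormedAddCommGroup Matrix.frobeniusNormedSpace

theorem stmt_10 {n : ℕ}
    (f : EuclideanSpace ℝ (Fin n) → ℝ) (hf : Differentiable ℝ f)
    (B : Matrix (Fin n) (Fin n) ℝ) (hB : Bᵀ = B)
    (γ : ℝ → Matrix (Fin n) (Fin n) ℝ) (hγ0 : γ 0 = 1) (hγ' : HasDerivAt γ B 0)
    (hinv : ∀ x : EuclideanSpace ℝ (Fin n), ∀ᶠ t in nhds (0 : ℝ),
      f (WithLp.toLp 2 ((γ t).mulVec x : Fin n → ℝ) : EuclideanSpace ℝ (Fin n)) = f x)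
    (x : ℝ → EuclideanSpace ℝ (Fin n))
    (hx : ∀ t, HasDerivAt x (-(gradient f (x t))) t) :
    ∀ s t : ℝ, ⟪x s, (WithLp.toLp 2 (B.mulVec (x s) : Fin n → ℝ) : EuclideanSpace ℝ (Fin n))⟫ =
      ⟪x t, (WithLp.toLp 2 (B.mulVec (x t) : Fin n → ℝ) : EuclideanSpace ℝ (Fin n))⟫ := by
  classical
  -- matrix action as a continuous linear map on EuclideanSpace
  let T : EuclideanSpace ℝ (Fin n) →L[ℝ] EuclideanSpace ℝ (Fin n) :=
    LinearMap.toContinuousLinearMap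
      { toFun := fun v => WithLp.toLp 2 (B.mulVec v : Fin n → ℝ)
        map_add' := fun u v => by
          ext i
          simp [Matrix.mulVec, dotProduct, mul_add, Finset.sum_add_distrib]
        map_smul' := fun c v => by
          ext i
          simp [Matrix.mulVec, dotProduct, Finset.mul_sum, mul_left_comm, mul_comm] }
  have hT : ∀ v : EuclideanSpace ℝ (Fin n),
      T v = (WithLp.toLp 2 (B.mulVec v : Fin n → ℝ) : EuclideanSpace ℝ (Fin n)) := fun v => rfl
  -- symmetry
  have hsym : ∀ u v : EuclideanSpace ℝ (Fin n), ⟪u, T v⟫ = ⟪T u, v⟫ := by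
    intro u v
    simp only [hT, PiLp.inner_apply, RCLike.inner_apply, conj_trivial]
    have : (u : Fin n → ℝ) ⬝ᵥ B.mulVec v = B.mulVec u ⬝ᵥ (v : Fin n → ℝ) := by
      rw [Matrix.dotProduct_mulVec, ← hB, Matrix.vecMul_transpose, hB]
    simpa [dotProduct, mul_comm] using this
  -- key: gradient is orthogonal to B y
  have key : ∀ y : EuclideanSpace ℝ (Fin n), ⟪gradient f y, T y⟫ = 0 := by
    intro y
    let L : Matrix (Fin n) (Fin n) ℝ →ₗ[ℝ] EuclideanSpace ℝ (Fin n) :=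
      { toFun := fun M => WithLp.toLp 2 (M.mulVec y : Fin n → ℝ)
        map_add' := fun M N => by
          ext i
          simp [Matrix.mulVec, dotProduct, add_mul, Finset.sum_add_distrib]
        map_smul' := fun c M => by
          ext i
          simp [Matrix.mulVec, dotProduct, Finset.mul_sum, mul_assoc] }
    have hL : HasDerivAt (fun t => L.toContinuousLinearMap (γ t))
        (L.toContinuousLinearMap B) 0 :=
      L.toContinuousLinearMap.hasFDerivAt.comp_hasDerivAt 0 hγ'
    have h1 : HasDerivAt (fun t => f (L.toContinuousLinearMap (γ t)))
        (fderiv ℝ f (L.toContinuousLinearMap (γ 0)) (L.toContinuousLinearMap B)) 0 :=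
      ((hf _).hasFDerivAt.comp_hasDerivAt 0 hL)
    have hid : L.toContinuousLinearMap (γ 0) = y := by
      show WithLp.toLp 2 ((γ 0).mulVec y : Fin n → ℝ) = y
      rw [hγ0, Matrix.one_mulVec]
    rw [hid] at h1
    have heq : (fun _ : ℝ => f y) =ᶠ[nhds (0:ℝ)]
        (fun t => f (L.toContinuousLinearMap (γ t))) := by
      filter_upwards [hinv y] with t ht using ht.symm
    have h2 : HasDerivAt (fun _ : ℝ => f y)
        (fderiv ℝ f y (L.toContinuousLinearMap B)) 0 :=
      h1.congr_of_eventuallyEq heq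
    have hzero : fderiv ℝ f y (L.toContinuousLinearMap B) = 0 :=
      h2.unique (hasDerivAt_const 0 (f y))
    have hgrad : HasGradientAt f (gradient f y) y := (hf y).hasGradientAt
    have hfd : fderiv ℝ f y = InnerProductSpace.toDual ℝ _ (gradient f y) :=
      (hgrad.hasFDerivAt).fderiv
    have hLB : L.toContinuousLinearMap B = T y := rfl
    rw [hfd, hLB] at hzero
    simpa [InnerProductSpace.toDual_apply_apply] using hzero
  -- the conserved quantity
  have hderiv : ∀ t : ℝ,
      HasDerivAt (fun t => ⟪x t, T (x t)⟫) 0 t := by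
    intro t
    have hTx : HasDerivAt (fun t => T (x t)) (T (-(gradient f (x t)))) t :=
      T.hasFDerivAt.comp_hasDerivAt t (hx t)
    have := (hx t).inner ℝ hTx
    have e : ⟪x t, T (-(gradient f (x t)))⟫ + ⟪-(gradient f (x t)), T (x t)⟫ = 0 := by
      have h1 : ⟪x t, T (gradient f (x t))⟫ = 0 := by
        rw [hsym, real_inner_comm]; exact key (x t)
      simp [map_neg, h1, key (x t)]
    rw [e] at this
    exact this
  intro s t
  have hconst : ∀ a b : ℝ, ⟪x a, T (x a)⟫ = ⟪x b, T (x b)⟫ := by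
    intro a b
    exact is_const_of_deriv_eq_zero (fun u => (hderiv u).differentiableAt)
      (fun u => (hderiv u).deriv) a b
  simpa [hT] using hconst s t
end

section
/- Let n ≥ 2 and define f : ℝⁿ → ℝ by f(x) = (x₁² + x₂² + ⋯ + x_{n−1}² − x_n² − 1)². If x : ℝ → ℝⁿ is differentiable and satisfies the gradient flow equation x'(t) = −∇f(x(t)) for all t ∈ ℝ, then for each index i ∈ {1, …, n−1} the function t ↦ x_i(t) · x_n(t) is constant. -/
open scoped BigOperators

/-- Conserved quantities for the gradient flow of the Lorentz-group–invariant function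
`f(x) = (x₁² + ⋯ + x_{n−1}² − x_n² − 1)²`: each product `x_i(t) · x_n(t)` (for
`i ∈ {1, …, n−1}`) is constant along any gradient trajectory. -/
theorem stmt_11 {n : ℕ} (hn : 2 ≤ n)
    (f : EuclideanSpace ℝ (Fin n) → ℝ)
    (hf : ∀ x : EuclideanSpace ℝ (Fin n),
      f x = ((∑ i : Fin n, if (i : ℕ) < n - 1 then (x i) ^ 2 else -(x i) ^ 2) - 1) ^ 2)
    (x : ℝ → EuclideanSpace ℝ (Fin n))
    (hx : ∀ t, HasDerivAt x (-(gradient f (x t))) t) :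
    ∀ i : Fin n, (i : ℕ) < n - 1 → ∀ s t : ℝ,
      x s i * x s ⟨n - 1, by omega⟩ = x t i * x t ⟨n - 1, by omega⟩ := by
  classical
  set ε : Fin n → ℝ := fun i => if (i : ℕ) < n - 1 then (1:ℝ) else -1 with hε
  set g : EuclideanSpace ℝ (Fin n) → ℝ := fun y => (∑ j : Fin n, ε j * (y j) ^ 2) - 1
    with hg
  have hfg : ∀ y, f y = (g y) ^ 2 := by
    intro y
    rw [hf y]
    congr 2
    refine Finset.sum_congr rfl fun j _ => ?_
    by_cases h : (j : ℕ) < n - 1 <;> simp [hε, h]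
  -- gradient formula
  set G : EuclideanSpace ℝ (Fin n) → EuclideanSpace ℝ (Fin n) :=
    fun y => WithLp.toLp 2 (fun i => 4 * g y * (ε i * y i)) with hG
  have key : ∀ y, HasGradientAt f (G y) y := by
    intro y
    have hgder : HasFDerivAt g
        (∑ j : Fin n, (ε j * (2 * y j)) • (EuclideanSpace.proj j : EuclideanSpace ℝ (Fin n) →L[ℝ] ℝ)) y := by
      have : HasFDerivAt (fun z : EuclideanSpace ℝ (Fin n) => ∑ j : Fin n, ε j * (z j) ^ 2)
          (∑ j : Fin n, (ε j * (2 * y j)) • (EuclideanSpace.proj j : EuclideanSpace ℝ (Fin n) →L[ℝ] ℝ)) y := by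
        simp only [pow_two]
        refine HasFDerivAt.fun_sum fun j _ => ?_
        have h1 : HasFDerivAt (fun z : EuclideanSpace ℝ (Fin n) => z j)
            (EuclideanSpace.proj j : EuclideanSpace ℝ (Fin n) →L[ℝ] ℝ) y := by
          exact (EuclideanSpace.proj j : EuclideanSpace ℝ (Fin n) →L[ℝ] ℝ).hasFDerivAt
        have h3 := (h1.mul h1).const_mul (ε j)
        convert h3 using 1
        all_goals try exact rfl
        ext v
        simp only [ContinuousLinearMap.smul_apply, ContinuousLinearMap.add_apply,
          PiLp.proj_apply, smul_eq_mul]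
        ring
      simpa [hg] using this.sub_const 1
    have hfder : HasFDerivAt f
        ((2 * g y) • ∑ j : Fin n, (ε j * (2 * y j)) • (EuclideanSpace.proj j : EuclideanSpace ℝ (Fin n) →L[ℝ] ℝ)) y := by
      have h : HasDerivAt (fun s : ℝ => s ^ 2) (2 * g y) (g y) := by
        simpa using (hasDerivAt_pow 2 (g y))
      have := h.comp_hasFDerivAt y hgder
      convert this using 1
      all_goals try exact rfl
      · funext z; exact hfg z
    rw [hasGradientAt_iff_hasFDerivAt]
    convert hfder using 1
    all_goals try exact rfl
    ext v
    simp only [InnerProductSpace.toDual_apply_apply, ContinuousLinearMap.smul_apply,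
      ContinuousLinearMap.sum_apply, PiLp.proj_apply, hG, smul_eq_mul]
    rw [PiLp.inner_apply]
    rw [Finset.mul_sum]
    refine Finset.sum_congr rfl fun j _ => ?_
    simp only [RCLike.inner_apply, starRingEnd_apply, star_trivial, smul_eq_mul]
    ring
  have hgrad : ∀ t, gradient f (x t) = G (x t) := fun t => (key (x t)).gradient
  intro i hi s t
  set N : Fin n := ⟨n - 1, by omega⟩ with hN
  have hNi : (N : ℕ) = n - 1 := rfl
  -- coordinate derivatives
  have hcoord : ∀ (j : Fin n) (t : ℝ),
      HasDerivAt (fun t => x t j) (-(4 * g (x t) * (ε j * x t j))) t := by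
    intro j t
    have := (EuclideanSpace.proj j : EuclideanSpace ℝ (Fin n) →L[ℝ] ℝ).hasFDerivAt.comp_hasDerivAt t (hx t)
    have h2 : (EuclideanSpace.proj j : EuclideanSpace ℝ (Fin n) →L[ℝ] ℝ) (-(gradient f (x t)))
        = -(4 * g (x t) * (ε j * x t j)) := by
      rw [hgrad t]
      simp [hG]
    rw [h2] at this
    exact this
  have hprod : ∀ t : ℝ, HasDerivAt (fun t => x t i * x t N) 0 t := by
    intro t
    have h := (hcoord i t).mul (hcoord N t)
    have hεi : ε i = 1 := by simp [hε, hi]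
    have hεN : ε N = -1 := by simp [hε, hNi]
    convert h using 1
    all_goals try exact rfl
    rw [hεi, hεN]
    ring
  have : ∀ s t : ℝ, (fun t => x t i * x t N) s = (fun t => x t i * x t N) t := by
    intro s t
    exact is_const_of_deriv_eq_zero (fun u => (hprod u).differentiableAt)
      (fun u => (hprod u).deriv) s t
  exact this s t
end

section
/- Let M be a real m×n matrix, and let X : ℝ → ℝ^{m×r} and Y : ℝ → ℝ^{r×n} be differentiable matrix-valued curves satisfying X'(t) = −2(X(t)Y(t) − M)Y(t)ᵀ and Y'(t) = −2X(t)ᵀ(X(t)Y(t) − M) for all t ∈ ℝ (this is the negative gradient flow of f(X,Y) = ‖XY − M‖_F² with respect to the Frobenius inner product). Then the function t ↦ X(t)ᵀX(t) − Y(t)Y(t)ᵀ is constant. -/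
open scoped Matrix

attribute [local instance] Matrix.frobeniusNormedAddCommGroup Matrix.frobeniusNormedSpace

variable {a b c : ℕ}

lemma mulBB : IsBoundedBilinearMap ℝ (fun p : Matrix (Fin a) (Fin b) ℝ × Matrix (Fin b) (Fin c) ℝ => p.1 * p.2) where
  add_left x y z := Matrix.add_mul x y z
  smul_left r x y := Matrix.smul_mul r x y
  add_right x y z := Matrix.mul_add x y z
  smul_right r x y := Matrix.mul_smul x r y
  bound := ⟨1, one_pos, fun x y => by simpa using Matrix.frobenius_norm_mul x y⟩

lemma hd_mul {A : ℝ → Matrix (Fin a) (Fin b) ℝ} {B : ℝ → Matrix (Fin b) (Fin c) ℝ}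
    {A' B'} {t : ℝ} (hA : HasDerivAt A A' t) (hB : HasDerivAt B B' t) :
    HasDerivAt (fun t => A t * B t) (A' * B t + A t * B') t := by
  have := (mulBB.hasFDerivAt (A t, B t)).comp_hasDerivAt t (hA.prodMk hB)
  simp only [IsBoundedBilinearMap.deriv_apply, add_comm] at this
  exact this

lemma hd_transpose {A : ℝ → Matrix (Fin a) (Fin b) ℝ} {A'} {t : ℝ}
    (hA : HasDerivAt A A' t) : HasDerivAt (fun t => (A t)ᵀ) A'ᵀ t := by
  have h : HasDerivAt (fun t => (Matrix.transposeLinearEquiv (Fin a) (Fin b) ℝ ℝ).toLinearMap.toContinuousLinearMap (A t)) ((Matrix.transposeLinearEquiv (Fin a) (Fin b) ℝ ℝ).toLinearMap.toContinuousLinearMap A') t :=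
    ((Matrix.transposeLinearEquiv (Fin a) (Fin b) ℝ ℝ).toLinearMap.toContinuousLinearMap.hasFDerivAt).comp_hasDerivAt t hA
  simpa [Matrix.transposeLinearEquiv] using h

/-- Conservation law for the negative gradient flow of `f(X,Y) = ‖XY − M‖_F²`:
the quantity `XᵀX − YYᵀ` is constant along trajectories. -/
theorem stmt_12 {m n r : ℕ} (M : Matrix (Fin m) (Fin n) ℝ)
    (X : ℝ → Matrix (Fin m) (Fin r) ℝ) (Y : ℝ → Matrix (Fin r) (Fin n) ℝ)
    (hX : ∀ t, HasDerivAt X (-((2 : ℝ) • ((X t * Y t - M) * (Y t)ᵀ))) t)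
    (hY : ∀ t, HasDerivAt Y (-((2 : ℝ) • ((X t)ᵀ * (X t * Y t - M)))) t) :
    ∀ s t : ℝ, (X s)ᵀ * X s - Y s * (Y s)ᵀ = (X t)ᵀ * X t - Y t * (Y t)ᵀ := by
  have key : ∀ t, HasDerivAt (fun t => (X t)ᵀ * X t - Y t * (Y t)ᵀ) 0 t := by
    intro t
    have h1 := (hd_mul (hd_transpose (hX t)) (hX t)).sub
      (hd_mul (hY t) (hd_transpose (hY t)))
    refine h1.congr_deriv ?_
    simp only [Matrix.transpose_neg, Matrix.transpose_smul, Matrix.transpose_mul,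
      Matrix.transpose_transpose, Matrix.neg_mul, Matrix.mul_neg, Matrix.smul_mul,
      Matrix.mul_smul, Matrix.mul_assoc]
    abel
  have hdiff : Differentiable ℝ (fun t => (X t)ᵀ * X t - Y t * (Y t)ᵀ) :=
    fun t => (key t).differentiableAt
  intro s t
  exact is_const_of_deriv_eq_zero hdiff (fun x => (key x).deriv) s t
end
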